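/- Suppose nonnegative integers h^{p,q} (Hodge numbers satisfying Serre duality, h^{0,0}=1, h^{3,0}=0, h^{0,1}=h^{0,2}+1) and second-page dimensions h_2^{p,q} satisfy: h_2^{1,0}=h_2^{1,1}=h_2^{2,2}=h_2^{2,3}=h_2^{3,0}=h_2^{0,3}=0, h_2^{0,0}=h_2^{3,3}=1, the d_2-isomorphism relations h_2^{0,1}=h_2^{2,0}, h_2^{0,2}=h_2^{2,1}, h_2^{1,2}=h_2^{3,1}, h_2^{1,3}=h_2^{3,2}, and the row-wise Euler characteristic equalities Σ_p (-1)^p h^{p,q} = Σ_p (-1)^p h_2^{p,q} for q = 0,1,2,3. Then h_2^{0,1} = h_2^{2,0} = h_2^{1,3} = h_2^{3,2} and h_2^{0,2} = h_2^{1,2} = h_2^{2,1} = h_2^{3,1}; in particular h_2^{p,q} = h_2^{3-p,3-q} for all p,q (Serre-type symmetry on the second page). -/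
import Mathlib


/-- Suppose nonnegative integers `h p q` (Hodge numbers of a hypothetical
complex structure on `S^6`, satisfying Serre duality, `h^{0,0}=1`, `h^{3,0}=0`,
`h^{0,1}=h^{0,2}+1`) and second-page dimensions `h2 p q` of the Frölicher spectral sequence
satisfy the vanishings `h2^{1,0}=h2^{1,1}=h2^{2,2}=h2^{2,3}=h2^{3,0}=h2^{0,3}=0`,
`h2^{0,0}=h2^{3,3}=1`, the `d₂`-isomorphism relations `h2^{0,1}=h2^{2,0}`,
`h2^{0,2}=h2^{2,1}`, `h2^{1,2}=h2^{3,1}`, `h2^{1,3}=h2^{3,2}`, and the row-wise Euler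
characteristic equalities `Σ_p (-1)^p h^{p,q} = Σ_p (-1)^p h2^{p,q}` for `q = 0,1,2,3`.
Then `h2^{0,1} = h2^{2,0} = h2^{1,3} = h2^{3,2}` and
`h2^{0,2} = h2^{1,2} = h2^{2,1} = h2^{3,1}`; in particular `h2^{p,q} = h2^{3-p,3-q}`
for all `0 ≤ p,q ≤ 3` (Serre-type symmetry on the second page). -/
theorem stmt10 (h h2 : ℕ → ℕ → ℕ)
    (hserre : ∀ p q, p ≤ 3 → q ≤ 3 → h p q = h (3 - p) (3 - q))
    (h00 : h 0 0 = 1) (h30 : h 3 0 = 0) (h01 : h 0 1 = h 0 2 + 1)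
    (h2_10 : h2 1 0 = 0) (h2_11 : h2 1 1 = 0) (h2_22 : h2 2 2 = 0) (h2_23 : h2 2 3 = 0)
    (h2_30 : h2 3 0 = 0) (h2_03 : h2 0 3 = 0)
    (h2_00 : h2 0 0 = 1) (h2_33 : h2 3 3 = 1)
    (hd2a : h2 0 1 = h2 2 0) (hd2b : h2 0 2 = h2 2 1)
    (hd2c : h2 1 2 = h2 3 1) (hd2d : h2 1 3 = h2 3 2)
    (heuler : ∀ q, q ≤ 3 →
      ∑ p ∈ Finset.range 4, (-1 : ℤ) ^ p * (h p q : ℤ) =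
      ∑ p ∈ Finset.range 4, (-1 : ℤ) ^ p * (h2 p q : ℤ)) :
    (h2 0 1 = h2 2 0 ∧ h2 2 0 = h2 1 3 ∧ h2 1 3 = h2 3 2) ∧
    (h2 0 2 = h2 1 2 ∧ h2 1 2 = h2 2 1 ∧ h2 2 1 = h2 3 1) ∧
    (∀ p q, p ≤ 3 → q ≤ 3 → h2 p q = h2 (3 - p) (3 - q)) := by
  have e0 := heuler 0 (by norm_num)
  have e1 := heuler 1 (by norm_num)
  have e2 := heuler 2 (by norm_num)
  have e3 := heuler 3 (by norm_num)
  simp [Finset.sum_range_succ] at e0 e1 e2 e3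
  have s03 := hserre 0 3 (by norm_num) (by norm_num)
  have s13 := hserre 1 3 (by norm_num) (by norm_num)
  have s23 := hserre 2 3 (by norm_num) (by norm_num)
  have s33 := hserre 3 3 (by norm_num) (by norm_num)
  have s02 := hserre 0 2 (by norm_num) (by norm_num)
  have s12 := hserre 1 2 (by norm_num) (by norm_num)
  have s22 := hserre 2 2 (by norm_num) (by norm_num)
  have s32 := hserre 3 2 (by norm_num) (by norm_num)
  simp only [show (3:ℕ)-0=3 from rfl, show (3:ℕ)-1=2 from rfl, show (3:ℕ)-2=1 from rfl,
    show (3:ℕ)-3=0 from rfl] at s03 s13 s23 s33 s02 s12 s22 s32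
  have key : h2 2 0 = h2 1 3 ∧ h2 0 2 = h2 1 2 := by
    constructor <;> omega
  obtain ⟨k1, k2⟩ := key
  refine ⟨⟨hd2a, k1, hd2d⟩, ⟨k2, by omega, by omega⟩, ?_⟩
  intro p q hp hq
  interval_cases p <;> interval_cases q <;> simp only [Nat.reduceSub] <;> omega
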